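/- Let A = (a_{ij}) be an n×n real matrix and let 2 ≤ p < ∞. Then Σ_{i=1}^n Σ_{j=1}^n ( |Σ_{k=1}^n a_{ik} − Σ_{k=1}^n a_{jk}|^p + |Σ_{k=1}^n a_{ki} − Σ_{k=1}^n a_{kj}|^p ) ≤ ((2n)^p / 2) · Σ_{i=1}^n Σ_{j=1}^n |a_{ij}|^p. -/

import Mathlib

open Complex Finset

/-! Auxiliary development for `stmt8`.  The proof is by complex interpolation
(Hadamard three-lines theorem) between the elementary `ℓ²` estimate
`Σ ≤ 2n²·Σ|a|²` and the trivial `ℓ^∞` estimate `2n`. -/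

/-- Signed complex power of a real number: `sgn t · |t|^w`. -/
noncomputable def cpw (t : ℝ) (w : ℂ) : ℂ :=
  if t = 0 then 0 else (if 0 < t then 1 else -1) * Complex.exp (w * (Real.log |t| : ℂ))

lemma cpw_zero (w : ℂ) : cpw 0 w = 0 := by simp [cpw]

lemma norm_cpw {t : ℝ} (ht : t ≠ 0) (w : ℂ) : ‖cpw t w‖ = |t| ^ w.re := by
  have habs : (0:ℝ) < |t| := abs_pos.mpr ht
  rw [cpw, if_neg ht, norm_mul]
  have h1 : ‖if 0 < t then (1:ℂ) else -1‖ = 1 := by split <;> simp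
  rw [h1, one_mul, Complex.norm_exp]
  rw [Real.rpow_def_of_pos habs]
  congr 1
  simp [Complex.mul_re, mul_comm]

lemma norm_cpw_le (t : ℝ) {w : ℂ} (hw : 0 ≤ w.re) : ‖cpw t w‖ ≤ |t| ^ w.re := by
  rcases eq_or_ne t 0 with rfl | ht
  · simp only [cpw_zero, norm_zero]
    exact Real.rpow_nonneg (abs_nonneg _) _
  · exact le_of_eq (norm_cpw ht w)

lemma norm_cpw_le_one (t : ℝ) {w : ℂ} (hw : w.re = 0) : ‖cpw t w‖ ≤ 1 := by
  rcases eq_or_ne t 0 with rfl | ht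
  · simp [cpw_zero]
  · rw [norm_cpw ht, hw, Real.rpow_zero]

lemma sq_norm_cpw (t : ℝ) {w : ℂ} (hw : 0 < w.re) : ‖cpw t w‖ ^ 2 = |t| ^ (2 * w.re) := by
  rcases eq_or_ne t 0 with rfl | ht
  · rw [cpw_zero, norm_zero, abs_zero, Real.zero_rpow (by positivity)]
    ring
  · rw [norm_cpw ht, ← Real.rpow_natCast (|t| ^ w.re) 2, ← Real.rpow_mul (abs_nonneg t)]
    norm_num [mul_comm]

lemma cpw_one (t : ℝ) : cpw t 1 = (t : ℂ) := by
  rcases eq_or_ne t 0 with rfl | ht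
  · simp [cpw_zero]
  · rw [cpw, if_neg ht, one_mul, ← Complex.ofReal_exp, Real.exp_log (abs_pos.mpr ht)]
    rcases lt_or_gt_of_ne ht with h | h
    · rw [if_neg (by linarith), abs_of_neg h]; push_cast; ring
    · rw [if_pos h, abs_of_pos h, one_mul]

lemma cpw_mul_self (t : ℝ) {c : ℝ} (hc : c + 1 ≠ 0) :
    cpw t (c : ℂ) * (t : ℂ) = ((|t| ^ (c + 1) : ℝ) : ℂ) := by
  rcases eq_or_ne t 0 with rfl | ht
  · simp [cpw_zero, Real.zero_rpow hc]
  · have habs : (0:ℝ) < |t| := abs_pos.mpr ht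
    have he : Complex.exp ((c:ℂ) * (Real.log |t| : ℂ)) = ((|t| ^ c : ℝ) : ℂ) := by
      rw [← Complex.ofReal_mul, ← Complex.ofReal_exp, Real.rpow_def_of_pos habs, mul_comm]
    have hsplit : |t| ^ (c + 1) = |t| ^ c * |t| := Real.rpow_add_one (ne_of_gt habs) c
    rw [cpw, if_neg ht, he, hsplit, Complex.ofReal_mul]
    rcases lt_or_gt_of_ne ht with h | h
    · rw [if_neg (by linarith), abs_of_neg h]; push_cast; ring
    · rw [if_pos h, abs_of_pos h]; push_cast; ring

lemma differentiable_cpw (t : ℝ) {g : ℂ → ℂ} (hg : Differentiable ℂ g) :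
    Differentiable ℂ (fun z => cpw t (g z)) := by
  rcases eq_or_ne t 0 with rfl | ht
  · simpa [cpw_zero] using differentiable_const (0 : ℂ)
  · simp only [cpw, if_neg ht]
    exact (differentiable_const _).mul (Complex.differentiable_exp.comp
      (hg.mul (differentiable_const _)))

/-- The linear "difference of row sums / column sums" gadget. -/
def Yg {R : Type*} [AddCommGroup R] {n : ℕ} (B : Fin n → Fin n → R) :
    (Fin n × Fin n) ⊕ (Fin n × Fin n) → R
  | Sum.inl m => ∑ k, (B m.1 k - B m.2 k)
  | Sum.inr m => ∑ k, (B k m.1 - B k m.2)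

lemma Yg_inl {R : Type*} [AddCommGroup R] {n : ℕ} (B : Fin n → Fin n → R) (m : Fin n × Fin n) :
    Yg B (Sum.inl m) = ∑ k, (B m.1 k - B m.2 k) := rfl

lemma Yg_inr {R : Type*} [AddCommGroup R] {n : ℕ} (B : Fin n → Fin n → R) (m : Fin n × Fin n) :
    Yg B (Sum.inr m) = ∑ k, (B k m.1 - B k m.2) := rfl

lemma Yg_ofReal {n : ℕ} (a : Fin n → Fin n → ℝ) (m : (Fin n × Fin n) ⊕ (Fin n × Fin n)) :
    Yg (fun s t => ((a s t : ℝ) : ℂ)) m = ((Yg a m : ℝ) : ℂ) := by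
  rcases m with m | m <;> simp [Yg_inl, Yg_inr]

/-- Identity: `Σᵢⱼ ‖uᵢ - uⱼ‖² = 2n Σ‖uᵢ‖² - 2‖Σuᵢ‖²` over `ℂ`. -/
lemma sum_sq_norm_sub (n : ℕ) (u : Fin n → ℂ) :
    ∑ i, ∑ j, ‖u i - u j‖ ^ 2 =
      2 * n * (∑ i, ‖u i‖ ^ 2) - 2 * ‖∑ i, u i‖ ^ 2 := by
  have hsq : ∀ z : ℂ, ‖z‖ ^ 2 = Complex.normSq z := fun z => by
    rw [Complex.sq_norm]
  have key : ∑ i, ∑ j, ((u i) * (starRingEnd ℂ) (u j)).re = Complex.normSq (∑ i, u i) := by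
    have h1 : (∑ i, u i) * (starRingEnd ℂ) (∑ j, u j)
        = ∑ i, ∑ j, (u i * (starRingEnd ℂ) (u j)) := by
      rw [map_sum, Finset.sum_mul_sum]
    have h2 : ((∑ i, u i) * (starRingEnd ℂ) (∑ j, u j)).re
        = ∑ i, ∑ j, ((u i) * (starRingEnd ℂ) (u j)).re := by
      rw [h1, Complex.re_sum]
      exact Finset.sum_congr rfl (fun i _ => Complex.re_sum _ _)
    rw [← h2, Complex.mul_conj, Complex.ofReal_re]
  simp only [hsq, Complex.normSq_sub]
  rw [← key]
  simp only [Finset.sum_sub_distrib, Finset.sum_add_distrib, Finset.sum_const,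
    Finset.card_univ, Fintype.card_fin, nsmul_eq_mul, ← Finset.mul_sum]
  ring

/-- Cauchy–Schwarz: `‖Σ dₖ‖² ≤ n Σ ‖dₖ‖²`. -/
lemma sq_norm_sum_le (n : ℕ) (d : Fin n → ℂ) :
    ‖∑ k, d k‖ ^ 2 ≤ n * ∑ k, ‖d k‖ ^ 2 := by
  have h1 : ‖∑ k, d k‖ ≤ ∑ k, ‖d k‖ := norm_sum_le _ _
  have h2 : (∑ k, ‖d k‖) ^ 2 ≤ (n : ℝ) * ∑ k, ‖d k‖ ^ 2 := by
    have := Finset.sum_mul_sq_le_sq_mul_sq Finset.univ (fun _ : Fin n => (1:ℝ))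
      (fun k => ‖d k‖)
    simpa [Finset.card_univ] using this
  calc ‖∑ k, d k‖ ^ 2 ≤ (∑ k, ‖d k‖) ^ 2 := by
        exact pow_le_pow_left₀ (norm_nonneg _) h1 2
    _ ≤ (n : ℝ) * ∑ k, ‖d k‖ ^ 2 := h2

/-- The `ℓ²` bound: `Σₘ ‖Yg B m‖² ≤ 2n² Σ‖B‖²`. -/
lemma sum_sq_norm_Yg_le (n : ℕ) (B : Fin n → Fin n → ℂ) :
    ∑ m : (Fin n × Fin n) ⊕ (Fin n × Fin n), ‖Yg B m‖ ^ 2 ≤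
      2 * (n:ℝ) ^ 2 * ∑ s, ∑ t, ‖B s t‖ ^ 2 := by
  rw [Fintype.sum_sum_type]
  have hrow : ∑ m : Fin n × Fin n, ‖Yg B (Sum.inl m)‖ ^ 2 ≤
      2 * (n:ℝ)^2 * (∑ s, ∑ t, ‖B s t‖ ^ 2) - 2 * n * ∑ k, ‖∑ i, B i k‖ ^ 2 := by
    have step1 : ∑ m : Fin n × Fin n, ‖Yg B (Sum.inl m)‖ ^ 2 ≤
        (n:ℝ) * ∑ k, ∑ i, ∑ j, ‖B i k - B j k‖ ^ 2 := by
      rw [Fintype.sum_prod_type]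
      calc ∑ i, ∑ j, ‖Yg B (Sum.inl (i, j))‖ ^ 2
          ≤ ∑ i, ∑ j, ((n:ℝ) * ∑ k, ‖B i k - B j k‖ ^ 2) := by
            apply Finset.sum_le_sum; intro i _
            apply Finset.sum_le_sum; intro j _
            exact sq_norm_sum_le n _
        _ = (n:ℝ) * ∑ k, ∑ i, ∑ j, ‖B i k - B j k‖ ^ 2 := by
            simp only [← Finset.mul_sum]
            congr 1
            calc ∑ i, ∑ j, ∑ k, ‖B i k - B j k‖ ^ 2
                = ∑ i, ∑ k, ∑ j, ‖B i k - B j k‖ ^ 2 :=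
                  Finset.sum_congr rfl fun i _ => Finset.sum_comm
              _ = ∑ k, ∑ i, ∑ j, ‖B i k - B j k‖ ^ 2 := Finset.sum_comm
    have step2 : ∀ k, ∑ i, ∑ j, ‖B i k - B j k‖ ^ 2
        = 2 * n * (∑ i, ‖B i k‖ ^ 2) - 2 * ‖∑ i, B i k‖ ^ 2 :=
      fun k => sum_sq_norm_sub n (fun i => B i k)
    calc ∑ m : Fin n × Fin n, ‖Yg B (Sum.inl m)‖ ^ 2
        ≤ (n:ℝ) * ∑ k, ∑ i, ∑ j, ‖B i k - B j k‖ ^ 2 := step1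
      _ = 2 * (n:ℝ)^2 * (∑ k, ∑ i, ‖B i k‖ ^ 2) - 2 * n * ∑ k, ‖∑ i, B i k‖ ^ 2 := by
          have expand : ∀ k : Fin n, (n:ℝ) * (2 * n * (∑ i, ‖B i k‖ ^ 2)
                - 2 * ‖∑ i, B i k‖ ^ 2)
              = 2 * (n:ℝ)^2 * (∑ i, ‖B i k‖ ^ 2) - 2 * n * ‖∑ i, B i k‖ ^ 2 := by
            intro k; ring
          rw [Finset.mul_sum]
          simp only [step2, expand]
          rw [Finset.sum_sub_distrib, ← Finset.mul_sum, ← Finset.mul_sum]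
      _ = 2 * (n:ℝ)^2 * (∑ s, ∑ t, ‖B s t‖ ^ 2) - 2 * n * ∑ k, ‖∑ i, B i k‖ ^ 2 := by
          rw [Finset.sum_comm]
  have hcol : ∑ m : Fin n × Fin n, ‖Yg B (Sum.inr m)‖ ^ 2 ≤
      2 * n * ∑ k, ‖∑ i, B i k‖ ^ 2 := by
    rw [Fintype.sum_prod_type]
    have : ∑ i, ∑ j, ‖(∑ k, B k i) - (∑ k, B k j)‖ ^ 2
        = 2 * n * (∑ i, ‖∑ k, B k i‖ ^ 2) - 2 * ‖∑ i, ∑ k, B k i‖ ^ 2 :=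
      sum_sq_norm_sub n (fun i => ∑ k, B k i)
    calc ∑ i, ∑ j, ‖Yg B (Sum.inr (i, j))‖ ^ 2
        = ∑ i, ∑ j, ‖(∑ k, B k i) - (∑ k, B k j)‖ ^ 2 := by
          apply Finset.sum_congr rfl; intro i _
          apply Finset.sum_congr rfl; intro j _
          rw [Yg_inr, Finset.sum_sub_distrib]
      _ ≤ 2 * n * (∑ i, ‖∑ k, B k i‖ ^ 2) := by
          rw [this]
          have : (0:ℝ) ≤ 2 * ‖∑ i, ∑ k, B k i‖ ^ 2 := by positivity
          linarith
  linarith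

/-- The `ℓ^∞` bound. -/
lemma norm_Yg_le_of_le_one (n : ℕ) (B : Fin n → Fin n → ℂ) (hB : ∀ s t, ‖B s t‖ ≤ 1)
    (m : (Fin n × Fin n) ⊕ (Fin n × Fin n)) : ‖Yg B m‖ ≤ 2 * n := by
  have key : ∀ (u v : Fin n → ℂ), (∀ k, ‖u k‖ ≤ 1) → (∀ k, ‖v k‖ ≤ 1) →
      ‖∑ k, (u k - v k)‖ ≤ 2 * n := by
    intro u v hu hv
    calc ‖∑ k, (u k - v k)‖ ≤ ∑ k, ‖u k - v k‖ := norm_sum_le _ _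
      _ ≤ ∑ _k : Fin n, (2:ℝ) := by
          apply Finset.sum_le_sum; intro k _
          calc ‖u k - v k‖ ≤ ‖u k‖ + ‖v k‖ := norm_sub_le _ _
            _ ≤ 2 := by have := hu k; have := hv k; linarith
      _ = 2 * n := by simp [Finset.sum_const, Finset.card_univ, mul_comm]
  rcases m with ⟨i, j⟩ | ⟨i, j⟩
  · exact key (fun k => B i k) (fun k => B j k) (fun k => hB i k) (fun k => hB j k)
  · exact key (fun k => B k i) (fun k => B k j) (fun k => hB k i) (fun k => hB k j)

lemma norm_Yg_le_two_sum (n : ℕ) (B : Fin n → Fin n → ℂ)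
    (m : (Fin n × Fin n) ⊕ (Fin n × Fin n)) :
    ‖Yg B m‖ ≤ 2 * ∑ s, ∑ t, ‖B s t‖ := by
  have hrowle : ∀ i, ∑ k, ‖B i k‖ ≤ ∑ s, ∑ t, ‖B s t‖ := by
    intro i
    exact Finset.single_le_sum (f := fun s => ∑ t, ‖B s t‖)
      (fun s _ => Finset.sum_nonneg fun t _ => norm_nonneg _) (Finset.mem_univ i)
  have hcolle : ∀ i, ∑ k, ‖B k i‖ ≤ ∑ s, ∑ t, ‖B s t‖ := by
    intro i
    calc ∑ k, ‖B k i‖ ≤ ∑ k, ∑ t, ‖B k t‖ := by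
          apply Finset.sum_le_sum; intro k _
          exact Finset.single_le_sum (f := fun t => ‖B k t‖)
            (fun t _ => norm_nonneg _) (Finset.mem_univ i)
      _ = ∑ s, ∑ t, ‖B s t‖ := rfl
  have key : ∀ (u v : Fin n → ℂ), (∑ k, ‖u k‖ ≤ ∑ s, ∑ t, ‖B s t‖) →
      (∑ k, ‖v k‖ ≤ ∑ s, ∑ t, ‖B s t‖) → ‖∑ k, (u k - v k)‖ ≤ 2 * ∑ s, ∑ t, ‖B s t‖ := by
    intro u v hu hv
    calc ‖∑ k, (u k - v k)‖ ≤ ∑ k, ‖u k - v k‖ := norm_sum_le _ _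
      _ ≤ ∑ k, (‖u k‖ + ‖v k‖) := by
          apply Finset.sum_le_sum; intro k _; exact norm_sub_le _ _
      _ = (∑ k, ‖u k‖) + ∑ k, ‖v k‖ := Finset.sum_add_distrib
      _ ≤ 2 * ∑ s, ∑ t, ‖B s t‖ := by linarith
  rcases m with ⟨i, j⟩ | ⟨i, j⟩
  · exact key (fun k => B i k) (fun k => B j k) (hrowle i) (hrowle j)
  · exact key (fun k => B k i) (fun k => B k j) (hcolle i) (hcolle j)


lemma rpow_le_max_one (t : ℝ) {e P : ℝ} (he : 0 ≤ e) (heP : e ≤ P) :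
    |t| ^ e ≤ (max 1 |t|) ^ P := by
  calc |t| ^ e ≤ (max 1 |t|) ^ e :=
        Real.rpow_le_rpow (abs_nonneg t) (le_max_right 1 |t|) he
    _ ≤ (max 1 |t|) ^ P :=
        Real.rpow_le_rpow_of_exponent_le (le_max_left 1 |t|) heP

lemma le_rpow_half {u v : ℝ} (hu : 0 ≤ u) (h : u ^ 2 ≤ v) : u ≤ v ^ ((1:ℝ)/2) := by
  have h2 := Real.rpow_le_rpow (sq_nonneg u) h (by norm_num : (0:ℝ) ≤ 1/2)
  calc u = (u ^ 2) ^ ((1:ℝ)/2) := by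
        rw [← Real.rpow_natCast u 2, ← Real.rpow_mul hu]; norm_num
    _ ≤ v ^ ((1:ℝ)/2) := h2

set_option maxHeartbeats 2000000 in
lemma engine (n : ℕ) (a : Fin n → Fin n → ℝ) (p : ℝ) (hp : 2 ≤ p) :
    ∑ m : (Fin n × Fin n) ⊕ (Fin n × Fin n), |Yg a m| ^ p ≤
      (2 * (n : ℝ)) ^ p / 2 * ∑ s, ∑ t, |a s t| ^ p := by
  have hp0 : (0:ℝ) < p := lt_of_lt_of_le two_pos hp
  have hpne : p ≠ 0 := ne_of_gt hp0
  rcases Nat.eq_zero_or_pos n with rfl | hn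
  · simp
  have hnR : (0:ℝ) < n := by exact_mod_cast hn
  set L : ℝ := ∑ m : (Fin n × Fin n) ⊕ (Fin n × Fin n), |Yg a m| ^ p with hLdef
  set S : ℝ := ∑ s, ∑ t, |a s t| ^ p with hSdef
  have hLnn : 0 ≤ L := Finset.sum_nonneg fun m _ => Real.rpow_nonneg (abs_nonneg _) _
  have hSnn : 0 ≤ S := Finset.sum_nonneg fun s _ =>
    Finset.sum_nonneg fun t _ => Real.rpow_nonneg (abs_nonneg _) _
  rcases eq_or_lt_of_le hLnn with hL0 | hLpos
  · rw [← hL0]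
    have : (0:ℝ) ≤ (2 * (n:ℝ)) ^ p / 2 * S := by positivity
    linarith
  -- S > 0
  have hSpos : 0 < S := by
    rcases eq_or_lt_of_le hSnn with hS0 | h
    · exfalso
      have hzero : ∀ s t, a s t = 0 := by
        intro s t
        have hall := (Finset.sum_eq_zero_iff_of_nonneg (fun s _ =>
          Finset.sum_nonneg fun t _ => Real.rpow_nonneg (abs_nonneg _) _)).mp hS0.symm
        have hrow := hall s (Finset.mem_univ s)
        have h2 := (Finset.sum_eq_zero_iff_of_nonneg (fun t _ =>
          Real.rpow_nonneg (abs_nonneg _) _)).mp hrow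
        have h3 := h2 t (Finset.mem_univ t)
        have h4 : |a s t| = 0 := by
          by_contra hne
          have : (0:ℝ) < |a s t| := lt_of_le_of_ne (abs_nonneg _) (Ne.symm hne)
          exact absurd h3 (ne_of_gt (Real.rpow_pos_of_pos this p))
        exact abs_eq_zero.mp h4
      have hY : ∀ m, Yg a m = 0 := by
        intro m
        rcases m with ⟨i, j⟩ | ⟨i, j⟩ <;>
          simp [Yg_inl, Yg_inr, hzero]
      have : L = 0 := by
        rw [hLdef]
        exact Finset.sum_eq_zero fun m _ => by rw [hY m, abs_zero, Real.zero_rpow hpne]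
      exact absurd this (ne_of_gt hLpos)
    · exact h
  -- set-up for interpolation
  set θ : ℝ := 1 - 2 / p with hθdef
  have h2p : 2 / p ≤ 1 := by
    rw [div_le_one hp0]; exact hp
  have hθ0 : 0 ≤ θ := by rw [hθdef]; linarith
  have hθ1 : θ ≤ 1 := by
    rw [hθdef]
    have : 0 < 2 / p := by positivity
    linarith
  set F : ℂ → ℂ := fun z => Complex.exp (-((1 + z)/2) * (Real.log L : ℂ)) *
    ∑ m : (Fin n × Fin n) ⊕ (Fin n × Fin n),
      cpw (Yg a m) ((p:ℂ)/2 * (1 + z)) *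
        Yg (fun s t => cpw (a s t) ((p:ℂ)/2 * (1 - z))) m with hFdef
  -- differentiability
  have hdiff : Differentiable ℂ F := by
    rw [hFdef]
    apply Differentiable.mul
    · apply Complex.differentiable_exp.comp
      apply Differentiable.mul _ (differentiable_const _)
      apply Differentiable.neg
      apply Differentiable.div_const
      exact (differentiable_const _).add differentiable_id
    · apply Differentiable.fun_sum
      intro m _
      apply Differentiable.mul
      · apply differentiable_cpw
        exact (differentiable_const _).mul ((differentiable_const _).add differentiable_id)
      · have he2 : Differentiable ℂ (fun z : ℂ => (p:ℂ)/2 * (1 - z)) :=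
          (differentiable_const _).mul ((differentiable_const _).sub differentiable_id)
        rcases m with ⟨i, j⟩ | ⟨i, j⟩
        · show Differentiable ℂ (fun z => ∑ k, (cpw (a i k) ((p:ℂ)/2 * (1 - z)) -
            cpw (a j k) ((p:ℂ)/2 * (1 - z))))
          exact Differentiable.fun_sum fun k _ =>
            (differentiable_cpw _ he2).sub (differentiable_cpw _ he2)
        · show Differentiable ℂ (fun z => ∑ k, (cpw (a k i) ((p:ℂ)/2 * (1 - z)) -
            cpw (a k j) ((p:ℂ)/2 * (1 - z))))
          exact Differentiable.fun_sum fun k _ =>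
            (differentiable_cpw _ he2).sub (differentiable_cpw _ he2)
  -- norm of the exponential prefactor
  have hexp_norm : ∀ z : ℂ, ‖Complex.exp (-((1 + z)/2) * (Real.log L : ℂ))‖ =
      Real.exp (-((1 + z.re)/2) * Real.log L) := by
    intro z
    rw [Complex.norm_exp, Complex.re_mul_ofReal]
    congr 2
    have : (-((1 + z)/2) : ℂ) = ((-(1/2) : ℝ) : ℂ) * (1 + z) := by push_cast; ring
    rw [this, Complex.re_ofReal_mul, Complex.add_re, Complex.one_re]
    ring
  -- real parts of the exponents
  have hre1 : ∀ z : ℂ, ((p:ℂ)/2 * (1 + z)).re = p/2 * (1 + z.re) := by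
    intro z
    have h : ((p:ℂ)/2 * (1 + z)) = ((p/2 : ℝ) : ℂ) * (1 + z) := by push_cast; ring
    rw [h, Complex.re_ofReal_mul, Complex.add_re, Complex.one_re]
  have hre2 : ∀ z : ℂ, ((p:ℂ)/2 * (1 - z)).re = p/2 * (1 - z.re) := by
    intro z
    have h : ((p:ℂ)/2 * (1 - z)) = ((p/2 : ℝ) : ℂ) * (1 - z) := by push_cast; ring
    rw [h, Complex.re_ofReal_mul, Complex.sub_re, Complex.one_re]
  -- boundedness on the strip
  have hBdd : BddAbove ((norm ∘ F) '' Complex.HadamardThreeLines.verticalClosedStrip 0 1) := by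
    set D : ℝ := 2 * ∑ s, ∑ t, (max 1 |a s t|) ^ p with hDdef
    have hDnn : 0 ≤ D := by
      rw [hDdef]
      have : ∀ s : Fin n, (0:ℝ) ≤ ∑ t, (max 1 |a s t|) ^ p := fun s =>
        Finset.sum_nonneg fun t _ => Real.rpow_nonneg (le_trans zero_le_one (le_max_left _ _)) _
      have := Finset.sum_nonneg fun s (_ : s ∈ Finset.univ) => this s
      linarith
    refine ⟨Real.exp |Real.log L| *
      ∑ m : (Fin n × Fin n) ⊕ (Fin n × Fin n), (max 1 |Yg a m|) ^ p * D, ?_⟩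
    rintro x ⟨z, hz, rfl⟩
    simp only [Function.comp_apply]
    have hzre : z.re ∈ Set.Icc (0:ℝ) 1 := hz
    rw [hFdef]
    simp only
    rw [norm_mul]
    have h1 : ‖Complex.exp (-((1 + z)/2) * (Real.log L : ℂ))‖ ≤ Real.exp |Real.log L| := by
      rw [hexp_norm z]
      apply Real.exp_le_exp.mpr
      calc -((1 + z.re)/2) * Real.log L ≤ |(-((1 + z.re)/2) * Real.log L)| := le_abs_self _
        _ = ((1 + z.re)/2) * |Real.log L| := by
            rw [abs_mul]
            congr 1
            rw [abs_neg, _root_.abs_of_nonneg]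
            have := hzre.1; linarith
        _ ≤ |Real.log L| := by
            have h2 := hzre.2
            have hh : (1 + z.re)/2 ≤ 1 := by linarith
            nlinarith [abs_nonneg (Real.log L)]
    have h2 : ‖∑ m : (Fin n × Fin n) ⊕ (Fin n × Fin n),
        cpw (Yg a m) ((p:ℂ)/2 * (1 + z)) *
          Yg (fun s t => cpw (a s t) ((p:ℂ)/2 * (1 - z))) m‖ ≤
        ∑ m : (Fin n × Fin n) ⊕ (Fin n × Fin n), (max 1 |Yg a m|) ^ p * D := by
      refine le_trans (norm_sum_le _ _) (Finset.sum_le_sum ?_)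
      intro m _
      rw [norm_mul]
      apply mul_le_mul
      · have hnn : (0:ℝ) ≤ p/2 * (1 + z.re) :=
          mul_nonneg (by positivity) (by linarith [hzre.1])
        apply le_trans (norm_cpw_le _ (by rw [hre1]; exact hnn))
        rw [hre1]
        apply rpow_le_max_one _ hnn
        have := hzre.2
        nlinarith
      · apply le_trans (norm_Yg_le_two_sum n _ m)
        rw [hDdef]
        have hentry : ∀ s t, ‖cpw (a s t) ((p:ℂ)/2 * (1 - z))‖ ≤ (max 1 |a s t|) ^ p := by
          intro s t
          apply le_trans (norm_cpw_le _ (by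
            rw [hre2]
            have := hzre.2
            nlinarith))
          rw [hre2]
          apply rpow_le_max_one
          · have := hzre.2; nlinarith
          · have h0 := hzre.1; nlinarith
        have hsum : ∑ s, ∑ t, ‖cpw (a s t) ((p:ℂ)/2 * (1 - z))‖ ≤
            ∑ s, ∑ t, (max 1 |a s t|) ^ p :=
          Finset.sum_le_sum fun s _ => Finset.sum_le_sum fun t _ => hentry s t
        linarith
      · positivity
      · positivity
    exact mul_le_mul h1 h2 (norm_nonneg _) (Real.exp_nonneg _)
  -- bound on the line Re z = 0
  set Ma : ℝ := (2 * (n:ℝ)^2 * S) ^ ((1:ℝ)/2) with hMadef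
  have ha : ∀ z ∈ Complex.re ⁻¹' {(0:ℝ)}, ‖F z‖ ≤ Ma := by
    intro z hz
    have hz0 : z.re = 0 := hz
    simp only [hFdef]
    rw [norm_mul, hexp_norm z, hz0]
    have hpsi : ∀ m : (Fin n × Fin n) ⊕ (Fin n × Fin n),
        ‖cpw (Yg a m) ((p:ℂ)/2 * (1 + z))‖ ^ 2 = |Yg a m| ^ p := by
      intro m
      have hre : ((p:ℂ)/2 * (1 + z)).re = p/2 := by rw [hre1, hz0]; ring
      rw [sq_norm_cpw _ (by rw [hre]; positivity), hre]
      congr 1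
      ring
    have hent : ∀ s t : Fin n,
        ‖cpw (a s t) ((p:ℂ)/2 * (1 - z))‖ ^ 2 = |a s t| ^ p := by
      intro s t
      have hre : ((p:ℂ)/2 * (1 - z)).re = p/2 := by rw [hre2, hz0]; ring
      rw [sq_norm_cpw _ (by rw [hre]; positivity), hre]
      congr 1
      ring
    have hG : ‖∑ m : (Fin n × Fin n) ⊕ (Fin n × Fin n),
        cpw (Yg a m) ((p:ℂ)/2 * (1 + z)) *
          Yg (fun s t => cpw (a s t) ((p:ℂ)/2 * (1 - z))) m‖ ≤
        (L * (2 * (n:ℝ)^2 * S)) ^ ((1:ℝ)/2) := by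
      apply le_rpow_half (norm_nonneg _)
      have h1 : ‖∑ m : (Fin n × Fin n) ⊕ (Fin n × Fin n),
          cpw (Yg a m) ((p:ℂ)/2 * (1 + z)) *
            Yg (fun s t => cpw (a s t) ((p:ℂ)/2 * (1 - z))) m‖ ≤
          ∑ m : (Fin n × Fin n) ⊕ (Fin n × Fin n),
            ‖cpw (Yg a m) ((p:ℂ)/2 * (1 + z))‖ *
              ‖Yg (fun s t => cpw (a s t) ((p:ℂ)/2 * (1 - z))) m‖ := by
        refine le_trans (norm_sum_le _ _) (le_of_eq ?_)
        exact Finset.sum_congr rfl fun m _ => norm_mul _ _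
      have h2 := Finset.sum_mul_sq_le_sq_mul_sq Finset.univ
        (fun m : (Fin n × Fin n) ⊕ (Fin n × Fin n) =>
          ‖cpw (Yg a m) ((p:ℂ)/2 * (1 + z))‖)
        (fun m => ‖Yg (fun s t => cpw (a s t) ((p:ℂ)/2 * (1 - z))) m‖)
      have h3 : ∑ m : (Fin n × Fin n) ⊕ (Fin n × Fin n),
          ‖cpw (Yg a m) ((p:ℂ)/2 * (1 + z))‖ ^ 2 = L := by
        rw [hLdef]
        exact Finset.sum_congr rfl fun m _ => hpsi m
      have h4 : ∑ m : (Fin n × Fin n) ⊕ (Fin n × Fin n),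
          ‖Yg (fun s t => cpw (a s t) ((p:ℂ)/2 * (1 - z))) m‖ ^ 2 ≤
          2 * (n:ℝ)^2 * S := by
        refine le_trans (sum_sq_norm_Yg_le n _) (le_of_eq ?_)
        congr 1
        rw [hSdef]
        exact Finset.sum_congr rfl fun s _ => Finset.sum_congr rfl fun t _ => hent s t
      have hnn1 : (0:ℝ) ≤ ∑ m : (Fin n × Fin n) ⊕ (Fin n × Fin n),
          ‖cpw (Yg a m) ((p:ℂ)/2 * (1 + z))‖ *
            ‖Yg (fun s t => cpw (a s t) ((p:ℂ)/2 * (1 - z))) m‖ :=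
        Finset.sum_nonneg fun m _ => mul_nonneg (norm_nonneg _) (norm_nonneg _)
      calc ‖∑ m : (Fin n × Fin n) ⊕ (Fin n × Fin n),
          cpw (Yg a m) ((p:ℂ)/2 * (1 + z)) *
            Yg (fun s t => cpw (a s t) ((p:ℂ)/2 * (1 - z))) m‖ ^ 2
          ≤ (∑ m : (Fin n × Fin n) ⊕ (Fin n × Fin n),
            ‖cpw (Yg a m) ((p:ℂ)/2 * (1 + z))‖ *
              ‖Yg (fun s t => cpw (a s t) ((p:ℂ)/2 * (1 - z))) m‖) ^ 2 :=
            pow_le_pow_left₀ (norm_nonneg _) h1 2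
        _ ≤ (∑ m : (Fin n × Fin n) ⊕ (Fin n × Fin n),
            ‖cpw (Yg a m) ((p:ℂ)/2 * (1 + z))‖ ^ 2) *
            (∑ m : (Fin n × Fin n) ⊕ (Fin n × Fin n),
              ‖Yg (fun s t => cpw (a s t) ((p:ℂ)/2 * (1 - z))) m‖ ^ 2) := h2
        _ ≤ L * (2 * (n:ℝ)^2 * S) := by
            rw [h3]
            exact mul_le_mul_of_nonneg_left h4 hLnn
    calc Real.exp (-((1 + 0)/2) * Real.log L) *
        ‖∑ m : (Fin n × Fin n) ⊕ (Fin n × Fin n),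
          cpw (Yg a m) ((p:ℂ)/2 * (1 + z)) *
            Yg (fun s t => cpw (a s t) ((p:ℂ)/2 * (1 - z))) m‖
        ≤ Real.exp (-((1 + 0)/2) * Real.log L) * (L * (2 * (n:ℝ)^2 * S)) ^ ((1:ℝ)/2) :=
          mul_le_mul_of_nonneg_left hG (Real.exp_nonneg _)
      _ = Ma := by
          rw [Real.mul_rpow hLnn (by positivity), hMadef]
          rw [Real.rpow_def_of_pos hLpos ((1:ℝ)/2), ← mul_assoc, ← Real.exp_add]
          have harith : -((1 + (0:ℝ))/2) * Real.log L + Real.log L * (1/2) = 0 := by ring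
          rw [harith, Real.exp_zero, one_mul]
  -- bound on the line Re z = 1
  have hb : ∀ z ∈ Complex.re ⁻¹' {(1:ℝ)}, ‖F z‖ ≤ 2 * (n:ℝ) := by
    intro z hz
    have hz1 : z.re = 1 := hz
    simp only [hFdef]
    rw [norm_mul, hexp_norm z, hz1]
    have hpsi : ∀ m : (Fin n × Fin n) ⊕ (Fin n × Fin n),
        ‖cpw (Yg a m) ((p:ℂ)/2 * (1 + z))‖ ≤ |Yg a m| ^ p := by
      intro m
      have hre : ((p:ℂ)/2 * (1 + z)).re = p := by rw [hre1, hz1]; ring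
      refine le_trans (norm_cpw_le _ (by rw [hre]; positivity)) (le_of_eq ?_)
      rw [hre]
    have hY : ∀ m : (Fin n × Fin n) ⊕ (Fin n × Fin n),
        ‖Yg (fun s t => cpw (a s t) ((p:ℂ)/2 * (1 - z))) m‖ ≤ 2 * (n:ℝ) := by
      intro m
      apply norm_Yg_le_of_le_one
      intro s t
      apply norm_cpw_le_one
      rw [hre2, hz1]
      ring
    have hGb : ‖∑ m : (Fin n × Fin n) ⊕ (Fin n × Fin n),
        cpw (Yg a m) ((p:ℂ)/2 * (1 + z)) *
          Yg (fun s t => cpw (a s t) ((p:ℂ)/2 * (1 - z))) m‖ ≤ L * (2 * (n:ℝ)) := by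
      refine le_trans (norm_sum_le _ _) ?_
      calc ∑ m : (Fin n × Fin n) ⊕ (Fin n × Fin n),
          ‖cpw (Yg a m) ((p:ℂ)/2 * (1 + z)) *
            Yg (fun s t => cpw (a s t) ((p:ℂ)/2 * (1 - z))) m‖
          = ∑ m : (Fin n × Fin n) ⊕ (Fin n × Fin n),
            ‖cpw (Yg a m) ((p:ℂ)/2 * (1 + z))‖ *
              ‖Yg (fun s t => cpw (a s t) ((p:ℂ)/2 * (1 - z))) m‖ :=
            Finset.sum_congr rfl fun m _ => norm_mul _ _
        _ ≤ ∑ m : (Fin n × Fin n) ⊕ (Fin n × Fin n), |Yg a m| ^ p * (2 * (n:ℝ)) := by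
            apply Finset.sum_le_sum
            intro m _
            exact mul_le_mul (hpsi m) (hY m) (norm_nonneg _)
              (Real.rpow_nonneg (abs_nonneg _) _)
        _ = L * (2 * (n:ℝ)) := by rw [← Finset.sum_mul, hLdef]
    have hexp1 : Real.exp (-((1 + (1:ℝ))/2) * Real.log L) = L⁻¹ := by
      have harith : -((1 + (1:ℝ))/2) * Real.log L = -Real.log L := by ring
      rw [harith, Real.exp_neg, Real.exp_log hLpos]
    rw [hexp1]
    calc L⁻¹ * ‖∑ m : (Fin n × Fin n) ⊕ (Fin n × Fin n),
        cpw (Yg a m) ((p:ℂ)/2 * (1 + z)) *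
          Yg (fun s t => cpw (a s t) ((p:ℂ)/2 * (1 - z))) m‖
        ≤ L⁻¹ * (L * (2 * (n:ℝ))) :=
          mul_le_mul_of_nonneg_left hGb (inv_nonneg.mpr hLnn)
      _ = 2 * (n:ℝ) := by field_simp
  -- value at θ
  have hpC : ((p:ℝ):ℂ) ≠ 0 := Complex.ofReal_ne_zero.mpr hpne
  have he1θ : (p:ℂ)/2 * (1 + ((θ:ℝ):ℂ)) = ((p - 1 : ℝ):ℂ) := by
    have h1 : ((θ:ℝ):ℂ) = 1 - 2/(p:ℂ) := by rw [hθdef]; push_cast; ring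
    rw [h1]
    field_simp
    push_cast; ring
  have he2θ : (p:ℂ)/2 * (1 - ((θ:ℝ):ℂ)) = 1 := by
    have h1 : ((θ:ℝ):ℂ) = 1 - 2/(p:ℂ) := by rw [hθdef]; push_cast; ring
    rw [h1]
    field_simp
    ring
  have hFθ : ‖F ((θ:ℝ):ℂ)‖ = L ^ ((1:ℝ)/p) := by
    simp only [hFdef]
    have hsum : ∑ m : (Fin n × Fin n) ⊕ (Fin n × Fin n),
        cpw (Yg a m) ((p:ℂ)/2 * (1 + ((θ:ℝ):ℂ))) *
          Yg (fun s t => cpw (a s t) ((p:ℂ)/2 * (1 - ((θ:ℝ):ℂ)))) m = ((L:ℝ):ℂ) := by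
      rw [hLdef]
      push_cast
      apply Finset.sum_congr rfl
      intro m _
      rw [he1θ, he2θ]
      have hBfun : (fun s t => cpw (a s t) (1:ℂ)) = fun s t => ((a s t : ℝ):ℂ) := by
        funext s t
        exact cpw_one (a s t)
      rw [hBfun, Yg_ofReal]
      have hkey := cpw_mul_self (Yg a m) (c := p - 1) (by
        rw [sub_add_cancel]; exact hpne)
      rw [hkey, sub_add_cancel]
    rw [hsum, norm_mul, hexp_norm, Complex.ofReal_re]
    rw [Complex.norm_real, Real.norm_eq_abs, _root_.abs_of_nonneg hLnn]
    rw [Real.rpow_def_of_pos hLpos]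
    nth_rewrite 2 [← Real.exp_log hLpos]
    rw [← Real.exp_add]
    congr 1
    rw [hθdef]
    field_simp
    ring
  -- Hadamard three lines
  have hmem : ((θ:ℝ):ℂ) ∈ Complex.HadamardThreeLines.verticalClosedStrip 0 1 := by
    simp only [Complex.HadamardThreeLines.verticalClosedStrip, Set.mem_preimage,
      Complex.ofReal_re, Set.mem_Icc]
    exact ⟨hθ0, hθ1⟩
  have key := Complex.HadamardThreeLines.norm_le_interp_of_mem_verticalClosedStrip' (f := F) zero_lt_one hmem
    hdiff.diffContOnCl hBdd ha hb
  rw [hFθ, Complex.ofReal_re] at key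
  -- final algebra
  have hMann : 0 ≤ Ma := Real.rpow_nonneg (by positivity) _
  have h2n : (0:ℝ) < 2 * (n:ℝ) := by positivity
  have hLpow : (L ^ ((1:ℝ)/p)) ^ p = L := by
    rw [← Real.rpow_mul hLnn, one_div_mul_cancel hpne, Real.rpow_one]
  have h5 : L ≤ Ma ^ ((1 - θ) * p) * (2 * (n:ℝ)) ^ (θ * p) := by
    have h6 := Real.rpow_le_rpow (Real.rpow_nonneg hLnn _) key (le_of_lt hp0)
    rw [hLpow] at h6
    rw [Real.mul_rpow (Real.rpow_nonneg hMann _) (Real.rpow_nonneg (le_of_lt h2n) _)] at h6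
    rw [← Real.rpow_mul hMann, ← Real.rpow_mul (le_of_lt h2n)] at h6
    rw [sub_zero, sub_zero, div_one] at h6
    exact h6
  have he1' : (1 - θ) * p = 2 := by
    rw [hθdef]
    field_simp
    ring
  have he2' : θ * p = p - 2 := by
    rw [hθdef]
    field_simp
  have hMa2 : Ma ^ (2:ℝ) = 2 * (n:ℝ)^2 * S := by
    rw [hMadef, ← Real.rpow_mul (by positivity)]
    norm_num
  have hb2 : (2 * (n:ℝ)) ^ (p - 2) = (2 * (n:ℝ)) ^ p / (2 * (n:ℝ)) ^ (2:ℝ) :=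
    Real.rpow_sub h2n p 2
  have hb3 : (2 * (n:ℝ)) ^ (2:ℝ) = 4 * (n:ℝ)^2 := by
    rw [show (2:ℝ) = ((2:ℕ):ℝ) by norm_num, Real.rpow_natCast]
    ring
  have hnne : (n:ℝ) ≠ 0 := ne_of_gt hnR
  calc L ≤ Ma ^ ((1 - θ) * p) * (2 * (n:ℝ)) ^ (θ * p) := h5
    _ = (2 * (n:ℝ)) ^ p / 2 * S := by
        rw [he1', he2', hMa2, hb2, hb3]
        field_simp
        ring

theorem stmt8 (n : ℕ) (a : Fin n → Fin n → ℝ) (p : ℝ) (hp : 2 ≤ p) :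
    ∑ i, ∑ j,
        (|∑ k, a i k - ∑ k, a j k| ^ p + |∑ k, a k i - ∑ k, a k j| ^ p) ≤
      (2 * (n : ℝ)) ^ p / 2 * ∑ i, ∑ j, |a i j| ^ p := by
  have h := engine n a p hp
  have hrw : ∑ m : (Fin n × Fin n) ⊕ (Fin n × Fin n), |Yg a m| ^ p =
      ∑ i, ∑ j, (|∑ k, a i k - ∑ k, a j k| ^ p + |∑ k, a k i - ∑ k, a k j| ^ p) := by
    rw [Fintype.sum_sum_type, Fintype.sum_prod_type, Fintype.sum_prod_type,
      ← Finset.sum_add_distrib]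
    apply Finset.sum_congr rfl
    intro i _
    rw [← Finset.sum_add_distrib]
    apply Finset.sum_congr rfl
    intro j _
    rw [Yg_inl, Yg_inr, Finset.sum_sub_distrib, Finset.sum_sub_distrib]
  rw [← hrw]
  exact h
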